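/- Let R be a commutative unital ring and A an associative unital R-algebra such that every element of A is integral over R (i.e., every a ∈ A satisfies a monic polynomial with coefficients in the image of R in A) and every element of A is either invertible or nilpotent. Then A is quasi-stable, i.e., every R-submodule J of A with 1 ∉ J is a (two-sided) Mathieu subspace of A. -/

import Mathlib

/-- `J` is a (two-sided) Mathieu subspace of the `R`-algebra `A`. -/
def IsMathieuSubspace {R A : Type*} [CommRing R] [Ring A] [Algebra R A]
    (J : Submodule R A) : Prop :=
  ∀ a : A, (∀ m : ℕ, 1 ≤ m → a ^ m ∈ J) →
    ∀ b c : A, ∃ N : ℕ, 1 ≤ N ∧ ∀ m : ℕ, N ≤ m → b * a ^ m * c ∈ J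

theorem stmt4 {R A : Type*} [CommRing R] [Ring A] [Algebra R A]
    (hint : ∀ a : A, IsIntegral R a)
    (hdich : ∀ a : A, IsUnit a ∨ IsNilpotent a) :
    ∀ J : Submodule R A, (1 : A) ∉ J → IsMathieuSubspace J := by
  intro J h1 a ha b c
  rcases hdich a with hu | ⟨n, hn⟩
  · -- unit case: derive a contradiction by showing 1 ∈ J
    exfalso
    apply h1
    obtain ⟨v, rfl⟩ := hu
    obtain ⟨p, hpm, hp0⟩ := hint ((↑v⁻¹ : A))
    set k := p.natDegree with hk
    have hsum : (0 : A) = ∑ i ∈ Finset.range (k + 1), p.coeff i • (↑v⁻¹ : A) ^ i := by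
      rw [← Polynomial.aeval_eq_sum_range' (Nat.lt_succ_self k), Polynomial.aeval_def, hp0]
    have hmul : (0 : A) = ∑ i ∈ Finset.range (k + 1), p.coeff i • (↑v : A) ^ (k - i) := by
      have h2 := congrArg (fun x => (↑v : A) ^ k * x) hsum
      simp only [mul_zero, Finset.mul_sum, mul_smul_comm] at h2
      rw [h2]
      refine Finset.sum_congr rfl fun i hi => ?_
      congr 1
      have hik : i ≤ k := Nat.lt_succ_iff.mp (Finset.mem_range.mp hi)
      have hvu : v ^ k * (v⁻¹) ^ i = v ^ (k - i) := by rw [inv_pow, ← pow_sub v hik]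
      calc (↑v : A) ^ k * (↑v⁻¹ : A) ^ i = ((v ^ k * (v⁻¹) ^ i : Aˣ) : A) := by push_cast; rfl
        _ = ((v ^ (k - i) : Aˣ) : A) := by rw [hvu]
        _ = (↑v : A) ^ (k - i) := by push_cast; rfl
    rw [Finset.sum_range_succ] at hmul
    have hck : p.coeff k • ((↑v : A) ^ (k - k)) = 1 := by
      simp [hk, hpm.coeff_natDegree]
    rw [hck] at hmul
    have h1' : (1 : A) = -∑ i ∈ Finset.range k, p.coeff i • (↑v : A) ^ (k - i) :=
      eq_neg_of_add_eq_zero_right hmul.symm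
    rw [h1']
    exact J.neg_mem (Submodule.sum_mem _ fun i hi =>
      J.smul_mem _ (ha _ (by have := Finset.mem_range.mp hi; omega)))
  · -- nilpotent case
    refine ⟨n + 1, Nat.le_add_left 1 n, fun m hm => ?_⟩
    have hz : a ^ m = 0 := by
      have : a ^ m = a ^ n * a ^ (m - n) := by rw [← pow_add]; congr 1; omega
      rw [this, hn, zero_mul]
    simp only [hz, mul_zero, zero_mul]; exact J.zero_mem
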